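/- Let A be symmetric positive definite with simple eigenvalue λ of A·Diag(d) at d ∈ ℝ^n_{++}, with right eigenvector x. Then the gradient of d ↦ λ(A Diag(d)) is (λ / (xᵀ D x)) · (x ∘ x), where D = Diag(d) and ∘ denotes the Hadamard (entrywise) product. -/

import Mathlib

open Matrix Filter

lemma aux_ker {n : ℕ} (M : Matrix (Fin n) (Fin n) ℝ) {i j : Fin n}
    (hadj : M.adjugate i j ≠ 0) {x : Fin n → ℝ} (hx : x ≠ 0)
    (hMx : M.mulVec x = 0) : ∀ v : Fin n → ℝ, M.mulVec v = 0 → ∃ t : ℝ, v = t • x := by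
  classical
  set U := M.updateRow j (Pi.single i 1) with hU
  have hdetU : U.det ≠ 0 := by rwa [← Matrix.adjugate_apply]
  have hUnit : IsUnit U.det := isUnit_iff_ne_zero.2 hdetU
  set w := U⁻¹.mulVec (Pi.single j 1) with hw
  have key : ∀ v : Fin n → ℝ, M.mulVec v = 0 → v = v i • w := by
    intro v hv
    have h1 : U.mulVec v = v i • (Pi.single j 1 : Fin n → ℝ) := by
      funext k
      by_cases hk : k = j
      · subst hk
        simp [Matrix.mulVec, U, Matrix.updateRow_self, single_dotProduct]
      · have hUk : U k = M k := Matrix.updateRow_ne hk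
        have h3 : U.mulVec v k = M.mulVec v k := by
          simp [Matrix.mulVec, hUk]
        rw [h3, hv]
        simp [Pi.single_apply, hk]
    have h2 : U⁻¹.mulVec (U.mulVec v) = v := by
      rw [Matrix.mulVec_mulVec, Matrix.nonsing_inv_mul U hUnit, Matrix.one_mulVec]
    rw [h1] at h2
    conv_lhs => rw [← h2]
    rw [Matrix.mulVec_smul]
  intro v hv
  have hxw := key x hMx
  have hxi : x i ≠ 0 := by
    intro h0
    apply hx
    rw [hxw, h0, zero_smul]
  have hwx : w = (x i)⁻¹ • x := by
    nth_rewrite 2 [hxw]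
    rw [smul_smul, inv_mul_cancel₀ hxi, one_smul]
  have hv2 := key v hv
  rw [hwx, smul_smul] at hv2
  exact ⟨v i * (x i)⁻¹, hv2⟩

lemma aux_ift {f : ℝ × ℝ → ℝ} {a c lam0 : ℝ} (hc : c ≠ 0)
    (hf : HasStrictFDerivAt f
      (a • (ContinuousLinearMap.fst ℝ ℝ ℝ) + c • (ContinuousLinearMap.snd ℝ ℝ ℝ)) (0, lam0))
    {g : ℝ → ℝ} (hg0 : g 0 = lam0) (hgc : ContinuousAt g 0)
    (hroot : ∀ᶠ t in nhds (0:ℝ), f (t, g t) = 0) (hf0 : f (0, lam0) = 0) :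
    HasDerivAt g (-a / c) 0 := by
  classical
  set φ : ℝ × ℝ →L[ℝ] ℝ :=
    a • (ContinuousLinearMap.fst ℝ ℝ ℝ) + c • (ContinuousLinearMap.snd ℝ ℝ ℝ) with hφ
  set Efwd : ℝ × ℝ →L[ℝ] ℝ × ℝ := (ContinuousLinearMap.fst ℝ ℝ ℝ).prod φ with hEfwd
  set Einv : ℝ × ℝ →L[ℝ] ℝ × ℝ :=
    (ContinuousLinearMap.fst ℝ ℝ ℝ).prod
      (c⁻¹ • ((ContinuousLinearMap.snd ℝ ℝ ℝ) - a • (ContinuousLinearMap.fst ℝ ℝ ℝ))) with hEinv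
  have hleft : Function.LeftInverse Einv Efwd := by
    intro q
    simp only [Einv, Efwd, φ, ContinuousLinearMap.prod_apply, ContinuousLinearMap.smul_apply,
      ContinuousLinearMap.add_apply, ContinuousLinearMap.sub_apply,
      ContinuousLinearMap.coe_fst', ContinuousLinearMap.coe_snd', smul_eq_mul]
    ext
    · rfl
    · show c⁻¹ * (a * q.1 + c * q.2 - a * q.1) = q.2
      field_simp
      ring
  have hright : Function.RightInverse Einv Efwd := by
    intro q
    simp only [Einv, Efwd, φ, ContinuousLinearMap.prod_apply, ContinuousLinearMap.smul_apply,
      ContinuousLinearMap.add_apply, ContinuousLinearMap.sub_apply,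
      ContinuousLinearMap.coe_fst', ContinuousLinearMap.coe_snd', smul_eq_mul]
    ext
    · rfl
    · show a * q.1 + c * (c⁻¹ * (q.2 - a * q.1)) = q.2
      field_simp
      ring
  set E : (ℝ × ℝ) ≃L[ℝ] (ℝ × ℝ) := ContinuousLinearEquiv.equivOfInverse Efwd Einv hleft hright
    with hE
  set F : ℝ × ℝ → ℝ × ℝ := fun q => (q.1, f q) with hF
  have hFd : HasStrictFDerivAt F (E : (ℝ × ℝ) →L[ℝ] (ℝ × ℝ)) (0, lam0) := by
    have : (E : (ℝ × ℝ) →L[ℝ] (ℝ × ℝ)) = Efwd := rfl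
    rw [this]
    exact HasStrictFDerivAt.prodMk (hasStrictFDerivAt_fst (𝕜 := ℝ)) hf
  have hF0 : F (0, lam0) = (0, 0) := by simp [F, hf0]
  set inv := hFd.localInverse F _ _ with hinv
  -- eventually, (t, g t) is recovered by inv
  have hGc : ContinuousAt (fun t : ℝ => (t, g t)) 0 := continuousAt_id.prodMk hgc
  have hGten : Tendsto (fun t : ℝ => (t, g t)) (nhds 0) (nhds (0, lam0)) := by
    have : (fun t : ℝ => (t, g t)) 0 = (0, lam0) := by simp [hg0]
    simpa [this] using hGc.tendsto
  have hev1 : ∀ᶠ t in nhds (0:ℝ), inv (F (t, g t)) = (t, g t) :=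
    hGten.eventually hFd.eventually_left_inverse
  have hev2 : ∀ᶠ t in nhds (0:ℝ), g t = (inv (t, 0)).2 := by
    filter_upwards [hev1, hroot] with t h1 h2
    have : F (t, g t) = (t, 0) := by simp [F, h2]
    rw [this] at h1
    exact congrArg Prod.snd h1.symm
  -- derivative of the local-inverse-based function
  have hinvd : HasStrictFDerivAt inv (E.symm : (ℝ × ℝ) →L[ℝ] (ℝ × ℝ)) (0, 0) := by
    have := hFd.to_localInverse
    rwa [hF0] at this
  have hj : HasDerivAt (fun t : ℝ => ((t, 0) : ℝ × ℝ)) (1, 0) 0 :=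
    HasDerivAt.prodMk (hasDerivAt_id (0:ℝ)) (hasDerivAt_const (0:ℝ) (0:ℝ))
  have hcomp : HasDerivAt (fun t : ℝ => inv (t, 0)) (E.symm (1, 0)) 0 := by
    have := HasFDerivAt.comp_hasDerivAt_of_eq (x := (0:ℝ)) hinvd.hasFDerivAt hj (by simp)
    simpa [Function.comp_def] using this
  have hψ : HasDerivAt (fun t : ℝ => (inv (t, 0)).2) ((E.symm (1, 0)).2) 0 := by
    have := HasFDerivAt.comp_hasDerivAt_of_eq (x := (0:ℝ))
      ((ContinuousLinearMap.snd ℝ ℝ ℝ).hasFDerivAt) hcomp rfl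
    simpa [Function.comp_def] using this
  have hval : (E.symm (1, 0)).2 = -a / c := by
    have : E.symm (1, 0) = Einv (1, 0) := rfl
    rw [this]
    simp [Einv, ContinuousLinearMap.prod_apply]
    ring
  rw [hval] at hψ
  exact hψ.congr_of_eventuallyEq hev2

lemma aux_det_bound {n : ℕ} (m : Fin n → (Fin n → ℝ)) :
    ‖Matrix.det (Matrix.of m)‖ ≤ (n.factorial : ℝ) * ∏ i, ‖m i‖ := by
  classical
  rw [Matrix.det_apply]
  calc ‖∑ σ : Equiv.Perm (Fin n), Equiv.Perm.sign σ • ∏ i, Matrix.of m (σ i) i‖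
      ≤ ∑ σ : Equiv.Perm (Fin n), ‖Equiv.Perm.sign σ • ∏ i, Matrix.of m (σ i) i‖ :=
        norm_sum_le _ _
    _ ≤ ∑ _σ : Equiv.Perm (Fin n), ∏ i, ‖m i‖ := by
        apply Finset.sum_le_sum
        intro σ _
        have h1 : ‖Equiv.Perm.sign σ • ∏ i, Matrix.of m (σ i) i‖
            = ‖∏ i, Matrix.of m (σ i) i‖ := by
          rcases Int.units_eq_one_or (Equiv.Perm.sign σ) with h | h <;> rw [h] <;> simp
        rw [h1]
        have h2 : ‖∏ i, Matrix.of m (σ i) i‖ ≤ ∏ i, ‖m (σ i)‖ := by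
          rw [norm_prod]
          apply Finset.prod_le_prod (fun i _ => norm_nonneg _)
          intro i _
          exact norm_le_pi_norm (m (σ i)) i
        calc ‖∏ i, Matrix.of m (σ i) i‖ ≤ ∏ i, ‖m (σ i)‖ := h2
          _ = ∏ i, ‖m i‖ := Equiv.prod_comp σ (fun i => ‖m i‖)
    _ = (n.factorial : ℝ) * ∏ i, ‖m i‖ := by
        rw [Finset.sum_const, Finset.card_univ, Fintype.card_perm, nsmul_eq_mul]
        simp [Fintype.card_fin]

noncomputable def detCM (n : ℕ) : ContinuousMultilinearMap ℝ (fun _ : Fin n => (Fin n → ℝ)) ℝ :=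
  MultilinearMap.mkContinuous
    (Matrix.detRowAlternating : (Fin n → ℝ) [⋀^Fin n]→ₗ[ℝ] ℝ).toMultilinearMap
    (n.factorial) (fun m => aux_det_bound m)

lemma detCM_apply {n : ℕ} (m : Fin n → (Fin n → ℝ)) :
    detCM n m = Matrix.det (Matrix.of m) := by
  rw [detCM]
  rfl

lemma detCM_strict {n : ℕ} (m : Fin n → (Fin n → ℝ)) :
    HasStrictFDerivAt (detCM n) ((detCM n).linearDeriv m) m := by
  have h1 := ((detCM n).analyticAt (x := m)).hasStrictFDerivAt
  have h2 := ((detCM n).hasFDerivAt m).fderiv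
  rwa [h2] at h1

lemma aux_eval_charpoly {n : ℕ} (M : Matrix (Fin n) (Fin n) ℝ) (μ : ℝ) :
    (M.charpoly).eval μ = (μ • (1 : Matrix (Fin n) (Fin n) ℝ) - M).det := by
  rw [Matrix.charpoly, ← Polynomial.coe_evalRingHom, RingHom.map_det]
  congr 1
  ext i j
  by_cases h : i = j <;>
    simp [h, Matrix.charmatrix_apply, Matrix.diagonal_apply, Matrix.one_apply,
      Matrix.smul_apply, Matrix.sub_apply]

lemma aux_det_updateRow_sum {n : ℕ} (M : Matrix (Fin n) (Fin n) ℝ) (i : Fin n) (v : Fin n → ℝ) :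
    (M.updateRow i v).det = ∑ j, v j * (M.updateRow i (Pi.single j 1)).det := by
  classical
  have key : ∀ s : Finset (Fin n),
      (M.updateRow i (∑ j ∈ s, v j • (Pi.single j 1 : Fin n → ℝ))).det
        = ∑ j ∈ s, v j * (M.updateRow i (Pi.single j 1)).det := by
    intro s
    induction s using Finset.induction_on with
    | empty =>
        rw [Finset.sum_empty, Finset.sum_empty]
        exact Matrix.det_eq_zero_of_row_eq_zero i (fun j => by simp)
    | insert j s hj ih =>
        rw [Finset.sum_insert hj, Matrix.det_updateRow_add, Matrix.det_updateRow_smul, ih,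
          Finset.sum_insert hj]
  have hv : v = ∑ j, v j • (Pi.single j 1 : Fin n → ℝ) := by
    funext k
    simp [Finset.sum_apply, Pi.single_apply]
  conv_lhs => rw [hv]
  rw [key Finset.univ]

/-- Gradient of a simple eigenvalue of `A Diag(d)`.  If `λ` is a simple eigenvalue of
`A Diag(d)` at `d > 0` with right eigenvector `x`, and `Λ` is a continuous local selection
of eigenvalues of `A Diag(·)` with `Λ d = λ`, then the gradient of `Λ` at `d` is
`(λ / (xᵀ D x)) · (x ∘ x)` (stated via directional derivatives). -/
theorem grad_simple_eigenvalue (n : ℕ) (A : Matrix (Fin n) (Fin n) ℝ) (hA : A.PosDef)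
    (d : Fin n → ℝ) (hd : ∀ i, 0 < d i)
    (lam : ℝ) (x : Fin n → ℝ) (hx : x ≠ 0)
    (heig : (A * Matrix.diagonal d).mulVec x = lam • x)
    (hsimple : (A * Matrix.diagonal d).charpoly.rootMultiplicity lam = 1)
    (Λ : (Fin n → ℝ) → ℝ)
    (hΛroot : ∀ᶠ y in nhds d, (A * Matrix.diagonal y).charpoly.IsRoot (Λ y))
    (hΛcont : ContinuousAt Λ d) (hΛd : Λ d = lam) :
    ∀ h : Fin n → ℝ,
      HasDerivAt (fun t : ℝ => Λ (d + t • h))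
        (∑ i, (lam / (∑ j, x j * (d j * x j)) * (x i * x i)) * h i) 0 := by
  classical
  intro h
  set D := Matrix.diagonal d with hD
  set B := A * D with hB
  set N := A * Matrix.diagonal h with hN
  set M := lam • (1 : Matrix (Fin n) (Fin n) ℝ) - B with hM
  set p := B.charpoly with hp
  -- basic polynomial facts
  have hproot : p.IsRoot lam := by
    have h3 := hΛroot.self_of_nhds
    rw [hΛd] at h3
    rw [hp, hB, hD]
    exact h3
  have hpne : p ≠ 0 := (Matrix.charpoly_monic B).ne_zero
  have hpd : ¬ p.derivative.IsRoot lam := by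
    intro hroot'
    have h1 := (Polynomial.one_lt_rootMultiplicity_iff_isRoot hpne).2 ⟨hproot, hroot'⟩
    rw [hsimple] at h1
    exact lt_irrefl 1 h1
  have hdet0 : M.det = 0 := by
    have h4 := aux_eval_charpoly B lam
    rw [← hM, ← hp] at h4
    rw [← h4]
    exact hproot
  -- symmetry of A
  have hAT : Aᵀ = A := by
    ext i j
    have h5 := congrFun (congrFun hA.1 i) j
    simpa [Matrix.conjTranspose_apply] using h5
  have hAsym : ∀ i j, A i j = A j i := by
    intro i j
    conv_lhs => rw [← hAT]
    rfl
  have hBij : ∀ i j, B i j = A i j * d j := fun i j => Matrix.mul_diagonal _ _ _ _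
  have hNij : ∀ i j, N i j = A i j * h j := fun i j => Matrix.mul_diagonal _ _ _ _
  have hBx : ∀ i, ∑ j, A i j * (d j * x j) = lam * x i := by
    intro i
    have h6 := congrFun heig i
    simp only [Matrix.mulVec, dotProduct, Pi.smul_apply, smul_eq_mul] at h6
    rw [← h6]
    apply Finset.sum_congr rfl
    intro j _
    rw [hBij]
    ring
  -- kernel vectors
  obtain ⟨i0, hxi0⟩ : ∃ i, x i ≠ 0 := Function.ne_iff.1 hx
  set y : Fin n → ℝ := fun k => d k * x k with hy
  have hyne : y ≠ 0 := by
    intro h0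
    apply hxi0
    have h7 := congrFun h0 i0
    simp only [hy, Pi.zero_apply] at h7
    exact (mul_eq_zero.1 h7).resolve_left (hd i0).ne'
  have hMx : M.mulVec x = 0 := by
    rw [hM, Matrix.sub_mulVec, Matrix.smul_mulVec, Matrix.one_mulVec, heig, sub_self]
  have hMty : Mᵀ.mulVec y = 0 := by
    have hMT : Mᵀ = lam • (1 : Matrix (Fin n) (Fin n) ℝ) - D * A := by
      rw [hM, Matrix.transpose_sub, Matrix.transpose_smul, Matrix.transpose_one, hB,
        Matrix.transpose_mul, hD, Matrix.diagonal_transpose, hAT]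
    have hyD : y = D.mulVec x := by
      funext k
      rw [hD]
      simp [Matrix.mulVec_diagonal, hy]
    have hADx : A.mulVec (D.mulVec x) = lam • x := by
      rw [Matrix.mulVec_mulVec, ← hB, heig]
    rw [hMT, Matrix.sub_mulVec, Matrix.smul_mulVec, Matrix.one_mulVec, hyD,
      ← Matrix.mulVec_mulVec, hADx, Matrix.mulVec_smul, sub_self]
  -- the function f and its strict derivative
  set f : ℝ × ℝ → ℝ :=
    fun q => (q.2 • (1 : Matrix (Fin n) (Fin n) ℝ) - B - q.1 • N).det with hf
  set L : ℝ × ℝ →L[ℝ] (Fin n → (Fin n → ℝ)) := ContinuousLinearMap.pi (fun i =>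
    ((ContinuousLinearMap.snd ℝ ℝ ℝ).smulRight ((1 : Matrix (Fin n) (Fin n) ℝ) i)) -
    ((ContinuousLinearMap.fst ℝ ℝ ℝ).smulRight (N i))) with hL
  set u : ℝ × ℝ → (Fin n → (Fin n → ℝ)) := fun q => (fun i => -(B i)) + L q with hu
  have hLq : ∀ (q : ℝ × ℝ) (i : Fin n),
      L q i = q.2 • ((1 : Matrix (Fin n) (Fin n) ℝ) i) - q.1 • N i := by
    intro q i
    rw [hL]
    simp [ContinuousLinearMap.pi_apply, ContinuousLinearMap.smulRight_apply]
  have hfu : f = fun q => detCM n (u q) := by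
    funext q
    show (q.2 • (1 : Matrix (Fin n) (Fin n) ℝ) - B - q.1 • N).det = detCM n (u q)
    rw [detCM_apply]
    congr 1
    ext i j
    rw [Matrix.of_apply]
    simp only [hu, Pi.add_apply, hLq, Matrix.sub_apply, Matrix.smul_apply, Pi.neg_apply,
      Pi.sub_apply, Pi.smul_apply, smul_eq_mul]
    ring
  have huq0 : u (0, lam) = fun i => M i := by
    funext i j
    simp only [hu, Pi.add_apply, hLq, hM, Matrix.sub_apply, Matrix.smul_apply, Pi.neg_apply,
      Pi.sub_apply, Pi.smul_apply, smul_eq_mul]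
    ring
  have hud : HasStrictFDerivAt u L (0, lam) := L.hasStrictFDerivAt.const_add _
  have hfd0 : HasStrictFDerivAt f (((detCM n).linearDeriv (u (0, lam))).comp L) (0, lam) := by
    rw [hfu]
    exact (detCM_strict (u (0, lam))).comp _ hud
  set T : ℝ := ∑ i, (M.updateRow i (N i)).det with hT
  set c' : ℝ := ∑ i, (M.updateRow i ((1 : Matrix (Fin n) (Fin n) ℝ) i)).det with hc'
  have hdetup : ∀ (i : Fin n) (v : Fin n → ℝ),
      detCM n (Function.update (fun k => M k) i v) = (M.updateRow i v).det := by
    intro i v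
    rw [detCM_apply]
    rfl
  have hφeq : ((detCM n).linearDeriv (u (0, lam))).comp L
      = (-T) • (ContinuousLinearMap.fst ℝ ℝ ℝ) + c' • (ContinuousLinearMap.snd ℝ ℝ ℝ) := by
    apply ContinuousLinearMap.ext
    rintro ⟨s, ν⟩
    rw [ContinuousLinearMap.comp_apply, ContinuousMultilinearMap.linearDeriv_apply]
    rw [huq0]
    have hterm : ∀ i : Fin n,
        detCM n (Function.update (fun k => M k) i (L (s, ν) i))
          = ν * (M.updateRow i ((1 : Matrix (Fin n) (Fin n) ℝ) i)).det
            + (-s) * (M.updateRow i (N i)).det := by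
      intro i
      rw [hLq]
      have h8 : (ν • ((1 : Matrix (Fin n) (Fin n) ℝ) i) - s • N i)
          = ν • ((1 : Matrix (Fin n) (Fin n) ℝ) i) + (-s) • N i := by
        funext j; simp; ring
      rw [h8, hdetup, Matrix.det_updateRow_add, Matrix.det_updateRow_smul,
        Matrix.det_updateRow_smul]
    rw [Finset.sum_congr rfl (fun i _ => hterm i), Finset.sum_add_distrib, ← Finset.mul_sum,
      ← Finset.mul_sum]
    simp only [ContinuousLinearMap.add_apply, ContinuousLinearMap.smul_apply,
      ContinuousLinearMap.coe_fst', ContinuousLinearMap.coe_snd', smul_eq_mul]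
    rw [← hT, ← hc']
    ring
  have hfd : HasStrictFDerivAt f
      ((-T) • (ContinuousLinearMap.fst ℝ ℝ ℝ) + c' • (ContinuousLinearMap.snd ℝ ℝ ℝ))
      (0, lam) := by
    rw [← hφeq]; exact hfd0
  -- c' is the derivative of the characteristic polynomial at lam
  have hc'eq : c' = p.derivative.eval lam := by
    have hj : HasDerivAt (fun μ : ℝ => ((0, μ) : ℝ × ℝ)) (0, 1) lam :=
      HasDerivAt.prodMk (hasDerivAt_const lam (0:ℝ)) (hasDerivAt_id lam)
    have hC : HasDerivAt (fun μ : ℝ => f (0, μ)) c' lam := by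
      have h9 := HasFDerivAt.comp_hasDerivAt_of_eq (x := lam) hfd.hasFDerivAt hj rfl
      simpa [Function.comp_def] using h9
    have hfeval : (fun μ : ℝ => f (0, μ)) = fun μ => p.eval μ := by
      funext μ
      simp only [hf]
      rw [hp, aux_eval_charpoly, zero_smul, sub_zero]
    rw [hfeval] at hC
    exact hC.unique (Polynomial.hasDerivAt p lam)
  have hc'ne : c' ≠ 0 := by
    rw [hc'eq]
    exact hpd
  -- adjugate structure
  have hone : ∀ i : Fin n, ((1 : Matrix (Fin n) (Fin n) ℝ) i) = Pi.single i 1 := by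
    intro i
    funext j
    simp [Matrix.one_apply, Pi.single_apply, eq_comm]
  have htr : c' = ∑ i, M.adjugate i i := by
    rw [hc']
    apply Finset.sum_congr rfl
    intro i _
    rw [hone, ← Matrix.adjugate_apply]
  obtain ⟨i1, -, hadj1⟩ : ∃ i ∈ Finset.univ, M.adjugate i i ≠ 0 := by
    apply Finset.exists_ne_zero_of_sum_ne_zero
    rw [← htr]; exact hc'ne
  have hker := aux_ker M hadj1 hx hMx
  have hadjT : Mᵀ.adjugate i1 i1 ≠ 0 := by
    rw [← Matrix.adjugate_transpose]
    exact hadj1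
  have hkerT := aux_ker Mᵀ hadjT hyne hMty
  have hcol : ∀ j, ∃ t : ℝ, (fun i => M.adjugate i j) = t • x := by
    intro j
    apply hker
    funext k
    have h10 : M.mulVec (fun i => M.adjugate i j) k = (M * M.adjugate) k j := by
      simp [Matrix.mulVec, Matrix.mul_apply, dotProduct]
    rw [h10, Matrix.mul_adjugate, hdet0]
    simp
  have hrow : ∀ i, ∃ t : ℝ, (fun j => M.adjugate i j) = t • y := by
    intro i
    apply hkerT
    funext k
    have h11 : Mᵀ.mulVec (fun j => M.adjugate i j) k = (M.adjugate * M) i k := by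
      simp only [Matrix.mulVec, Matrix.mul_apply, dotProduct, Matrix.transpose_apply]
      apply Finset.sum_congr rfl
      intro l _
      ring
    rw [h11, Matrix.adjugate_mul, hdet0]
    simp
  obtain ⟨β0, hrow0⟩ := hrow i0
  set β : ℝ := β0 / x i0 with hβ
  have hform : ∀ i j, M.adjugate i j = β * (x i * y j) := by
    intro i j
    obtain ⟨cj, hcolj⟩ := hcol j
    have e1 := congrFun hcolj i0
    have e2 := congrFun hrow0 j
    have e3 := congrFun hcolj i
    simp only [Pi.smul_apply, smul_eq_mul] at e1 e2 e3
    rw [e3]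
    have hcj : cj = β * y j := by
      rw [hβ]
      field_simp
      linear_combination e2 - e1
    rw [hcj]; ring
  -- sums
  set S : ℝ := ∑ j, x j * (d j * x j) with hS
  have hc'S : c' = β * S := by
    rw [htr, hS, Finset.mul_sum]
    apply Finset.sum_congr rfl
    intro i _
    rw [hform]
  have hβne : β ≠ 0 := fun h0 => hc'ne (by rw [hc'S, h0, zero_mul])
  have hSne : S ≠ 0 := fun h0 => hc'ne (by rw [hc'S, h0, mul_zero])
  have hTval : T = β * (lam * ∑ j, x j * x j * h j) := by
    have h12 : ∀ i, (M.updateRow i (N i)).det = ∑ j, N i j * (β * (x j * y i)) := by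
      intro i
      rw [aux_det_updateRow_sum]
      apply Finset.sum_congr rfl
      intro j _
      rw [← Matrix.adjugate_apply, hform]
    rw [hT, Finset.sum_congr rfl (fun i _ => h12 i), Finset.sum_comm]
    have h13 : ∀ j, ∑ i, N i j * (β * (x j * y i)) = β * ((h j * x j) * (lam * x j)) := by
      intro j
      have h14 : ∑ i, N i j * (β * (x j * y i))
          = (β * (h j * x j)) * ∑ i, A j i * (d i * x i) := by
        rw [Finset.mul_sum]
        apply Finset.sum_congr rfl
        intro i _
        rw [hNij, hAsym i j]
        simp only [hy]
        ring
      rw [h14, hBx j]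
      ring
    rw [Finset.sum_congr rfl (fun j _ => h13 j), ← Finset.mul_sum]
    congr 1
    rw [Finset.mul_sum]
    apply Finset.sum_congr rfl
    intro j _
    ring
  -- apply the implicit function machinery
  set g : ℝ → ℝ := fun t => Λ (d + t • h) with hg
  have hcurvec : Continuous fun t : ℝ => d + t • h := continuous_const.add (continuous_id.smul continuous_const)
  have hcurve : Tendsto (fun t : ℝ => d + t • h) (nhds 0) (nhds d) :=
    hcurvec.tendsto' 0 d (by simp)
  have hg0 : g 0 = lam := by simp [hg, hΛd]
  have hgc : ContinuousAt g 0 := by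
    have h1 : ContinuousAt (fun t : ℝ => d + t • h) 0 := hcurvec.continuousAt
    have h2 : ContinuousAt Λ (d + (0 : ℝ) • h) := by
      have h2' : d + (0 : ℝ) • h = d := by simp
      rw [h2']
      exact hΛcont
    exact ContinuousAt.comp (f := fun t : ℝ => d + t • h) (x := (0 : ℝ)) h2 h1
  have hroott : ∀ᶠ t in nhds (0 : ℝ), f (t, g t) = 0 := by
    filter_upwards [hcurve.eventually hΛroot] with t ht
    have hmat : B + t • N = A * Matrix.diagonal (d + t • h) := by
      ext i j
      simp only [hB, hN, hD, Matrix.add_apply, Matrix.smul_apply, Matrix.mul_diagonal,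
        smul_eq_mul, Pi.add_apply, Pi.smul_apply]
      ring
    have h15 : f (t, g t) = ((A * Matrix.diagonal (d + t • h)).charpoly).eval (g t) := by
      simp only [hf]
      rw [aux_eval_charpoly, ← hmat, sub_sub]
    rw [h15]
    exact ht
  have hf0 : f (0, lam) = 0 := by
    simp only [hf]
    rw [zero_smul, sub_zero, ← hM]
    exact hdet0
  have final := aux_ift hc'ne hfd hg0 hgc hroott hf0
  have hval : -(-T) / c' = ∑ i, (lam / S * (x i * x i)) * h i := by
    rw [hc'S, hTval, neg_neg]
    have h16 : ∑ i, (lam / S * (x i * x i)) * h i = (lam / S) * ∑ j, x j * x j * h j := by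
      rw [Finset.mul_sum]
      apply Finset.sum_congr rfl
      intro i _
      ring
    rw [h16]
    field_simp
  rwa [hval] at final
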